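/- arXiv:2007.05702 — 2 statements merged into one kernel-verified Lean document; each statement's English description precedes it below -/
import Mathlib

section
/- Let σ₁, σ₂ ⊆ ℂ be nonempty compact sets with Re(x) < 0 for all x ∈ σ₁ and Re(x) > 0 for all x ∈ σ₂, let σ = σ₁ ∪ σ₂, and let δ : σ → ℂ vanish identically on σ₂. Then var(δ, σ) ≤ var(δ|σ₁, σ₁) + ‖δ‖_{∞,σ₁}; that is, for every finite list S = [x₀,…,xₙ] of points of σ, cvar(δ, S)/vf(S) ≤ var(δ, σ₁) + sup_{x ∈ σ₁} |δ(x)|. -/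
open scoped ENNReal NNReal
open scoped ENNReal NNReal

/-- Cross product of two planar vectors (identified with complex numbers). -/
def crossC (v w : ℂ) : ℝ := v.re * w.im - v.im * w.re

/-- Signed side of the point `x` relative to the line through `u` with direction `v`. -/
def sideC (u v x : ℂ) : ℝ := crossC v (x - u)

/-- The segment `[x i, x (i+1)]` is a crossing segment of the list `x` on the line
through `u` with direction `v`. -/
def CrossSeg {n : ℕ} (u v : ℂ) (x : Fin (n+1) → ℂ) (i : Fin n) : Prop :=
  (sideC u v (x i.castSucc) * sideC u v (x i.succ) < 0) ∨
  ((i : ℕ) = 0 ∧ sideC u v (x i.castSucc) = 0) ∨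
  (sideC u v (x i.castSucc) ≠ 0 ∧ sideC u v (x i.succ) = 0)

/-- Number of crossing segments of a list on a given line. -/
noncomputable def vfLine {n : ℕ} (u v : ℂ) (x : Fin (n+1) → ℂ) : ℕ :=
  Nat.card {i : Fin n // CrossSeg u v x i}

/-- Variation factor of a list: the maximum of `vfLine` over all lines. -/
noncomputable def vf {n : ℕ} (x : Fin (n+1) → ℂ) : ℕ :=
  sSup {m : ℕ | ∃ u v : ℂ, v ≠ 0 ∧ m = vfLine u v x}

/-- Curve variation of `f` along a list of points. -/
noncomputable def cvar {n : ℕ} (f : ℂ → ℂ) (x : Fin (n+1) → ℂ) : ℝ :=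
  ∑ i : Fin n, ‖f (x i.succ) - f (x i.castSucc)‖

/-- Two-dimensional variation of `f` on `σ`. -/
noncomputable def twoVar (f : ℂ → ℂ) (σ : Set ℂ) : ℝ≥0∞ :=
  ⨆ (n : ℕ) (x : Fin (n+1) → ℂ) (_ : ∀ i, x i ∈ σ)
    (_ : ∀ i : Fin n, x i.castSucc ≠ x i.succ),
    ENNReal.ofReal (cvar f x) / (vf x : ℝ≥0∞)

-- sign-change lemmas over ℕ-indexed reals
lemma crossB (s : ℕ → ℝ) : ∀ (k a b : ℕ), b - a ≤ k → a < b → s a * s b < 0 →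
    ∃ i, a ≤ i ∧ i < b ∧ (s i * s (i+1) < 0 ∨ (s i ≠ 0 ∧ s (i+1) = 0)) := by
  intro k
  induction k with
  | zero => intro a b h1 h2; omega
  | succ k ih =>
    intro a b h1 h2 hs
    have hsa : s a ≠ 0 := by intro h; rw [h] at hs; simp at hs
    by_cases h0 : s (a+1) = 0
    · exact ⟨a, le_rfl, h2, Or.inr ⟨hsa, h0⟩⟩
    · rcases lt_trichotomy (s a * s (a+1)) 0 with h | h | h
      · exact ⟨a, le_rfl, h2, Or.inl h⟩
      · exact absurd (mul_eq_zero.mp h) (by push_neg; exact ⟨hsa, h0⟩)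
      · have hab : a + 1 < b := by
          rcases Nat.lt_or_ge (a+1) b with hh | hh
          · exact hh
          · exfalso; have : a + 1 = b := by omega
            rw [this] at h; linarith
        have : s (a+1) * s b < 0 := by nlinarith [sq_nonneg (s a), sq_abs (s a)]
        obtain ⟨i, h3, h4, h5⟩ := ih (a+1) b (by omega) hab this
        exact ⟨i, by omega, h4, h5⟩

lemma crossD (s : ℕ → ℝ) : ∀ (k a b : ℕ), b - a ≤ k → a < b → s a ≠ 0 → s b = 0 →
    ∃ i, a ≤ i ∧ i < b ∧ s i ≠ 0 ∧ s (i+1) = 0 := by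
  intro k
  induction k with
  | zero => intro a b h1 h2; omega
  | succ k ih =>
    intro a b h1 h2 ha hb
    by_cases h0 : s (a+1) = 0
    · exact ⟨a, le_rfl, h2, ha, h0⟩
    · have hab : a + 1 < b := by
        rcases Nat.lt_or_ge (a+1) b with hh | hh
        · exact hh
        · exfalso; have : a + 1 = b := by omega
          rw [this] at h0; exact h0 hb
      obtain ⟨i, h3, h4, h5⟩ := ih (a+1) b (by omega) hab h0 hb
      exact ⟨i, by omega, h4, h5⟩

lemma crossA (s : ℕ → ℝ) (b : ℕ) (hb : s b = 0) :
    ∃ i, (i < b ∨ (i = 0 ∧ b = 0)) ∧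
      ((i = 0 ∧ s 0 = 0) ∨ (s i ≠ 0 ∧ s (i+1) = 0)) := by
  by_cases h0 : s 0 = 0
  · by_cases hb0 : b = 0
    · exact ⟨0, Or.inr ⟨rfl, hb0⟩, Or.inl ⟨rfl, h0⟩⟩
    · exact ⟨0, Or.inl (by omega), Or.inl ⟨rfl, h0⟩⟩
  · have hbpos : 0 < b := by
      rcases Nat.eq_zero_or_pos b with h | h
      · exact absurd (h ▸ hb) h0
      · exact h
    obtain ⟨i, h3, h4, h5⟩ := crossD s b 0 b (by omega) hbpos h0 hb
    exact ⟨i, Or.inl h4, Or.inr h5⟩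

lemma vfLine_comp_le {n m : ℕ} (u v : ℂ) (x : Fin (n+1) → ℂ)
    (φ : Fin (m+1) → Fin (n+1)) (hφ : StrictMono φ) :
    vfLine u v (x ∘ φ) ≤ vfLine u v x := by
  classical
  set s : ℕ → ℝ := fun i => sideC u v (x ⟨min i n, by omega⟩) with hs
  have hsv : ∀ q : Fin (n+1), sideC u v (x q) = s q.val := by
    intro q
    have : (⟨min q.val n, by omega⟩ : Fin (n+1)) = q := by
      ext; simp; omega
    simp [hs, this]
  have key : ∀ j : Fin m, CrossSeg u v (x ∘ φ) j →
      ∃ i : Fin n, CrossSeg u v x i ∧ (i : ℕ) < ((φ j.succ : Fin (n+1)) : ℕ) ∧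
        ((j : ℕ) = 0 ∨ ((φ j.castSucc : Fin (n+1)) : ℕ) ≤ (i : ℕ)) := by
    intro j hj
    set a : ℕ := ((φ j.castSucc : Fin (n+1)) : ℕ) with ha
    set b : ℕ := ((φ j.succ : Fin (n+1)) : ℕ) with hbdef
    have hab : a < b := hφ (Fin.castSucc_lt_succ : j.castSucc < j.succ)
    have hbn : b ≤ n := by omega
    have mkcross : ∀ (i : ℕ) (hi : i < n),
        (s i * s (i+1) < 0 ∨ (s i ≠ 0 ∧ s (i+1) = 0)) → CrossSeg u v x ⟨i, hi⟩ := by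
      intro i hi hcr
      have e1 : sideC u v (x (Fin.castSucc ⟨i, hi⟩)) = s i := by
        rw [hsv]; rfl
      have e2 : sideC u v (x (Fin.succ ⟨i, hi⟩)) = s (i+1) := by
        rw [hsv]; rfl
      rcases hcr with h | h
      · exact Or.inl (by rw [e1, e2]; exact h)
      · exact Or.inr (Or.inr (by rw [e1, e2]; exact h))
    rcases hj with h | h | h
    · -- strict sign change
      rw [show sideC u v ((x ∘ φ) j.castSucc) = s a by rw [Function.comp_apply, hsv]; try rfl,
        show sideC u v ((x ∘ φ) j.succ) = s b by rw [Function.comp_apply, hsv]; try rfl] at h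
      obtain ⟨i, h1, h2, h3⟩ := crossB s (b - a) a b (by omega) hab h
      exact ⟨⟨i, by omega⟩, mkcross i (by omega) h3, (by omega : i < b), Or.inr (by omega : a ≤ i)⟩
    · -- initial segment on the line
      obtain ⟨hj0, h0⟩ := h
      rw [show sideC u v ((x ∘ φ) j.castSucc) = s a by rw [Function.comp_apply, hsv]; try rfl] at h0
      obtain ⟨i, hi1, hi2⟩ := crossA s a h0
      have hin : i < n := by rcases hi1 with h | h <;> omega
      rcases hi2 with ⟨hi0, hs0⟩ | hcr
      · refine ⟨⟨i, hin⟩, Or.inr (Or.inl ⟨hi0, ?_⟩), (by omega : i < b), Or.inl hj0⟩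
        subst hi0
        rw [show sideC u v (x (Fin.castSucc ⟨0, hin⟩)) = s 0 by rw [hsv]; rfl]
        exact hs0
      · exact ⟨⟨i, hin⟩, mkcross i hin (Or.inr hcr), (by omega : i < b), Or.inl hj0⟩
    · -- nonzero to zero
      obtain ⟨h0, h1⟩ := h
      rw [show sideC u v ((x ∘ φ) j.castSucc) = s a by rw [Function.comp_apply, hsv]; try rfl] at h0
      rw [show sideC u v ((x ∘ φ) j.succ) = s b by rw [Function.comp_apply, hsv]; try rfl] at h1
      obtain ⟨i, hi1, hi2, hi3⟩ := crossD s (b - a) a b (by omega) hab h0 h1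
      exact ⟨⟨i, by omega⟩, mkcross i (by omega) (Or.inr hi3), (by omega : i < b), Or.inr (by omega : a ≤ i)⟩
  choose g hg1 hg2 hg3 using key
  refine Nat.card_le_card_of_injective
    (fun p : {j : Fin m // CrossSeg u v (x ∘ φ) j} =>
      (⟨g p.1 p.2, hg1 p.1 p.2⟩ : {i : Fin n // CrossSeg u v x i})) ?_
  have main : ∀ p q : {j : Fin m // CrossSeg u v (x ∘ φ) j}, p.1 < q.1 →
      g p.1 p.2 ≠ g q.1 q.2 := by
    intro p q hpq hgeq
    have hv : ((g p.1 p.2 : Fin n) : ℕ) = ((g q.1 q.2 : Fin n) : ℕ) := congrArg Fin.val hgeq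
    have hp2 := hg2 p.1 p.2
    have hq0 : (q.1 : ℕ) ≠ 0 := by
      have : (p.1 : ℕ) < (q.1 : ℕ) := hpq
      omega
    have hqlow : ((φ q.1.castSucc : Fin (n+1)) : ℕ) ≤ ((g q.1 q.2 : Fin n) : ℕ) := by
      rcases hg3 q.1 q.2 with h | h
      · exact absurd h hq0
      · exact h
    have hle : ((φ p.1.succ : Fin (n+1)) : ℕ) ≤ ((φ q.1.castSucc : Fin (n+1)) : ℕ) := by
      have : p.1.succ ≤ q.1.castSucc := by
        rw [Fin.le_def]
        simp only [Fin.val_succ, Fin.coe_castSucc]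
        exact hpq
      exact hφ.monotone this
    omega
  intro p q hpq
  have h' : g p.1 p.2 = g q.1 q.2 := congrArg Subtype.val hpq
  rcases lt_trichotomy p.1 q.1 with h | h | h
  · exact absurd h' (main p q h)
  · exact Subtype.ext h
  · exact absurd h'.symm (main q p h)

lemma vfLine_le {n : ℕ} (u v : ℂ) (x : Fin (n+1) → ℂ) : vfLine u v x ≤ n := by
  calc vfLine u v x ≤ Nat.card (Fin n) :=
        Nat.card_le_card_of_injective Subtype.val Subtype.val_injective
    _ = n := by simp

lemma vf_bddAbove {n : ℕ} (x : Fin (n+1) → ℂ) :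
    BddAbove {m : ℕ | ∃ u v : ℂ, v ≠ 0 ∧ m = vfLine u v x} := by
  refine ⟨n, fun k hk => ?_⟩
  obtain ⟨u, v, _, rfl⟩ := hk
  exact vfLine_le u v x

lemma vfLine_le_vf {n : ℕ} (u v : ℂ) (hv : v ≠ 0) (x : Fin (n+1) → ℂ) :
    vfLine u v x ≤ vf x :=
  le_csSup (vf_bddAbove x) ⟨u, v, hv, rfl⟩

lemma vf_comp_le {n m : ℕ} (x : Fin (n+1) → ℂ)
    (φ : Fin (m+1) → Fin (n+1)) (hφ : StrictMono φ) :
    vf (x ∘ φ) ≤ vf x := by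
  refine csSup_le ⟨vfLine 0 1 (x ∘ φ), 0, 1, one_ne_zero, rfl⟩ ?_
  rintro k ⟨u, v, hv, rfl⟩
  exact le_trans (vfLine_comp_le u v x φ hφ) (vfLine_le_vf u v hv x)

lemma one_le_vf {n : ℕ} (x : Fin (n+2) → ℂ) : 1 ≤ vf x := by
  refine le_trans ?_ (vfLine_le_vf (x 0) 1 one_ne_zero x)
  have hcr : CrossSeg (x 0) 1 x 0 := by
    refine Or.inr (Or.inl ⟨rfl, ?_⟩)
    have : (Fin.castSucc (0 : Fin (n+1))) = (0 : Fin (n+2)) := rfl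
    rw [this]
    simp [sideC, crossC]
  rw [vfLine]
  have : Nonempty {i : Fin (n+1) // CrossSeg (x 0) 1 x i} := ⟨⟨0, hcr⟩⟩
  exact Nat.one_le_iff_ne_zero.mpr (Nat.card_ne_zero.mpr ⟨this, inferInstance⟩)

lemma cvar_le_twoVar_mul (δ : ℂ → ℂ) (σ₁ : Set ℂ) :
    ∀ (m : ℕ) (y : Fin (m+1) → ℂ), (∀ i, y i ∈ σ₁) →
      ENNReal.ofReal (cvar δ y) ≤ twoVar δ σ₁ * (vf y : ℝ≥0∞) := by
  intro m
  induction m with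
  | zero =>
    intro y hy
    simp [cvar]
  | succ m ih =>
    intro y hy
    by_cases hdup : ∃ j : Fin (m+1), y j.castSucc = y j.succ
    · obtain ⟨j, hj⟩ := hdup
      set y' : Fin (m+1) → ℂ := y ∘ (j.succ).succAbove with hy'
      have hmono : StrictMono ((j.succ : Fin (m+2)).succAbove) := Fin.strictMono_succAbove _
      have hcvar : cvar δ y = cvar δ y' := by
        have expand : cvar δ y = (fun i : Fin (m+1) => ‖δ (y i.succ) - δ (y i.castSucc)‖) j
            + ∑ i : Fin m, (fun i : Fin (m+1) => ‖δ (y i.succ) - δ (y i.castSucc)‖) (j.succAbove i) :=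
          Fin.sum_univ_succAbove _ j
        rw [expand]
        simp only [hj, sub_self, norm_zero, zero_add]
        rw [cvar]
        apply Finset.sum_congr rfl
        intro i _
        have idx1 : y' (Fin.succ i) = y ((j.succAbove i).succ) := by
          simp only [hy', Function.comp_apply]
          congr 1
          ext
          simp only [Fin.succAbove, Fin.val_succ, Fin.lt_def, Fin.coe_castSucc]
          split_ifs <;> simp_all <;> omega
        have idx2 : y' (Fin.castSucc i) = y ((j.succAbove i).castSucc) := by
          simp only [hy', Function.comp_apply]
          by_cases hij : (i : ℕ) = (j : ℕ)
          · have e1 : (j.succ).succAbove (Fin.castSucc i) = j.castSucc := by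
              ext
              simp only [Fin.succAbove, Fin.lt_def, Fin.coe_castSucc, Fin.val_succ]
              rw [if_pos (by omega)]
              exact hij
            have e2 : (j.succAbove i).castSucc = j.succ := by
              ext
              simp only [Fin.succAbove, Fin.lt_def, Fin.coe_castSucc, Fin.val_succ]
              rw [if_neg (by omega)]
              simp [hij]
            rw [e1, e2, hj]
          · congr 1
            ext
            simp only [Fin.succAbove, Fin.lt_def, Fin.coe_castSucc, Fin.val_succ]
            split_ifs <;> simp_all <;> omega
        rw [idx1, idx2]
      rw [hcvar]
      calc ENNReal.ofReal (cvar δ y') ≤ twoVar δ σ₁ * (vf y' : ℝ≥0∞) :=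
            ih y' (fun i => hy _)
        _ ≤ twoVar δ σ₁ * (vf y : ℝ≥0∞) := by
            apply mul_le_mul_right
            exact_mod_cast Nat.cast_le.mpr (vf_comp_le y _ hmono)
    · push_neg at hdup
      have hle : ENNReal.ofReal (cvar δ y) / (vf y : ℝ≥0∞) ≤ twoVar δ σ₁ := by
        rw [twoVar]
        exact le_iSup_of_le (m+1) (le_iSup_of_le y (le_iSup_of_le hy (le_iSup_of_le hdup le_rfl)))
      have hvf0 : (vf y : ℝ≥0∞) ≠ 0 := by
        simp only [ne_eq, Nat.cast_eq_zero]
        have := one_le_vf y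
        omega
      have hvft : (vf y : ℝ≥0∞) ≠ ⊤ := ENNReal.natCast_ne_top _
      calc ENNReal.ofReal (cvar δ y)
          = (ENNReal.ofReal (cvar δ y) / (vf y : ℝ≥0∞)) * (vf y : ℝ≥0∞) := by
            rw [ENNReal.div_mul_cancel hvf0 hvft]
        _ ≤ twoVar δ σ₁ * (vf y : ℝ≥0∞) := mul_le_mul_left hle _

lemma adj_in_finset {n m' : ℕ} (T : Finset (Fin (n+1))) (hT : T.card = m'+1)
    (i : Fin n) (h1 : i.castSucc ∈ T) (h2 : i.succ ∈ T) :
    ∃ j : Fin m', ((T.orderIsoOfFin hT j.castSucc : T) : Fin (n+1)) = i.castSucc ∧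
      ((T.orderIsoOfFin hT j.succ : T) : Fin (n+1)) = i.succ := by
  set e := T.orderIsoOfFin hT with he
  set a := e.symm ⟨i.castSucc, h1⟩ with ha
  set b := e.symm ⟨i.succ, h2⟩ with hb
  have hlt : a < b := by
    rw [ha, hb, e.symm.lt_iff_lt]
    exact Subtype.mk_lt_mk.mpr (Fin.castSucc_lt_succ : i.castSucc < i.succ)
  have hstep : (a : ℕ) + 1 = (b : ℕ) := by
    by_contra hcon
    have h3 : (a : ℕ) + 1 < (b : ℕ) := by
      have : (a : ℕ) < (b : ℕ) := hlt
      omega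
    set c := e ⟨(a : ℕ) + 1, by omega⟩ with hc
    have hac : e a < c := e.strictMono (by rw [Fin.lt_def]; simp)
    have hcb : c < e b := e.strictMono (by rw [Fin.lt_def]; simpa using h3)
    rw [ha, e.apply_symm_apply] at hac
    rw [hb, e.apply_symm_apply] at hcb
    have v1 : (i : ℕ) < ((c : Fin (n+1)) : ℕ) := hac
    have v2 : ((c : Fin (n+1)) : ℕ) < (i : ℕ) + 1 := hcb
    omega
  have haval : (a : ℕ) < m' := by
    have : (b : ℕ) < m' + 1 := b.isLt
    omega
  refine ⟨⟨(a : ℕ), haval⟩, ?_, ?_⟩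
  · have : (⟨(a : ℕ), haval⟩ : Fin m').castSucc = a := by ext; simp
    rw [this, ha, e.apply_symm_apply]
  · have : (⟨(a : ℕ), haval⟩ : Fin m').succ = b := by ext; simp; omega
    rw [this, hb, e.apply_symm_apply]


theorem stmt14 (σ₁ σ₂ : Set ℂ) (h1 : IsCompact σ₁) (h2 : IsCompact σ₂)
    (hn1 : σ₁.Nonempty) (hn2 : σ₂.Nonempty)
    (hre1 : ∀ z ∈ σ₁, z.re < 0) (hre2 : ∀ z ∈ σ₂, 0 < z.re)
    (δ : ℂ → ℂ) (hδ : ∀ z ∈ σ₂, δ z = 0) :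
    twoVar δ (σ₁ ∪ σ₂) ≤ twoVar δ σ₁ + ⨆ z ∈ σ₁, (‖δ z‖₊ : ℝ≥0∞) := by
  classical
  set M : ℝ≥0∞ := ⨆ z ∈ σ₁, (‖δ z‖₊ : ℝ≥0∞) with hM
  rw [twoVar]
  refine iSup_le fun N => iSup_le fun x => iSup_le fun hmem => iSup_le fun hne => ?_
  rcases N with _ | n
  · simp [cvar, ENNReal.zero_div]
  -- x : Fin (n+2) → ℂ
  have hvf1 : 1 ≤ vf x := one_le_vf x
  have h0 : (vf x : ℝ≥0∞) ≠ 0 := by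
    simp only [ne_eq, Nat.cast_eq_zero]; omega
  have ht : (vf x : ℝ≥0∞) ≠ ⊤ := ENNReal.natCast_ne_top _
  rw [ENNReal.div_le_iff h0 ht]
  set t : Fin (n+1) → ℝ := fun i => ‖δ (x i.succ) - δ (x i.castSucc)‖ with htdef
  have hofr : ENNReal.ofReal (cvar δ x) = ∑ i : Fin (n+1), ENNReal.ofReal (t i) := by
    rw [cvar]
    exact ENNReal.ofReal_sum_of_nonneg (fun i _ => norm_nonneg _)
  rw [hofr]
  set P : Fin (n+1) → Prop := fun i => x i.castSucc ∈ σ₁ ∧ x i.succ ∈ σ₁ with hP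
  rw [← Finset.sum_filter_add_sum_filter_not Finset.univ P]
  have boundA : ∑ i ∈ Finset.univ.filter P, ENNReal.ofReal (t i)
      ≤ twoVar δ σ₁ * (vf x : ℝ≥0∞) := by
    set T : Finset (Fin (n+2)) := Finset.univ.filter (fun j => x j ∈ σ₁) with hT
    rcases Finset.eq_empty_or_nonempty T with hTe | hTne
    · have : Finset.univ.filter P = ∅ := by
        rw [Finset.eq_empty_iff_forall_notMem]
        intro i hi
        rw [Finset.mem_filter] at hi
        have : i.castSucc ∈ T := by rw [hT, Finset.mem_filter]; exact ⟨Finset.mem_univ _, hi.2.1⟩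
        rw [hTe] at this
        exact absurd this (Finset.notMem_empty _)
      rw [this]
      simp
    · obtain ⟨m', hm'⟩ := Nat.exists_eq_succ_of_ne_zero (Finset.card_ne_zero.mpr hTne)
      set e := T.orderIsoOfFin hm' with he
      set ψ : Fin (m'+1) → Fin (n+2) := fun q => ((e q : T) : Fin (n+2)) with hψ
      have hψmono : StrictMono ψ := by
        intro p q hpq
        exact Subtype.coe_lt_coe.mpr (e.strictMono hpq)
      set y : Fin (m'+1) → ℂ := x ∘ ψ with hy
      have hymem : ∀ q, y q ∈ σ₁ := by
        intro q
        have : ψ q ∈ T := (e q).2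
        rw [hT, Finset.mem_filter] at this
        exact this.2
      have hsum : ∑ i ∈ Finset.univ.filter P, t i ≤ cvar δ y := by
        have hchoice : ∀ p : {i : Fin (n+1) // i ∈ Finset.univ.filter P},
            ∃ j : Fin m', ψ j.castSucc = p.1.castSucc ∧ ψ j.succ = p.1.succ := by
          rintro ⟨i, hi⟩
          rw [Finset.mem_filter] at hi
          have hc1 : i.castSucc ∈ T := by rw [hT, Finset.mem_filter]; exact ⟨Finset.mem_univ _, hi.2.1⟩
          have hc2 : i.succ ∈ T := by rw [hT, Finset.mem_filter]; exact ⟨Finset.mem_univ _, hi.2.2⟩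
          obtain ⟨j, hj1, hj2⟩ := adj_in_finset T hm' i hc1 hc2
          exact ⟨j, hj1, hj2⟩
        choose G hG1 hG2 using hchoice
        have hattach : ∑ i ∈ Finset.univ.filter P, t i
            = ∑ p ∈ (Finset.univ.filter P).attach, t p.1 := (Finset.sum_attach _ _).symm
        rw [hattach]
        have hpoint : ∀ p ∈ (Finset.univ.filter P).attach,
            t p.1 = ‖δ (y (G p).succ) - δ (y (G p).castSucc)‖ := by
          intro p _
          simp only [hy, Function.comp_apply, hG1 p, hG2 p]
          rfl
        rw [Finset.sum_congr rfl hpoint]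
        have hGinj : ∀ p ∈ (Finset.univ.filter P).attach, ∀ q ∈ (Finset.univ.filter P).attach,
            G p = G q → p = q := by
          intro p _ q _ hpq
          have e1 : ψ (G p).castSucc = p.1.castSucc := hG1 p
          have e2 : ψ (G q).castSucc = q.1.castSucc := hG1 q
          rw [hpq] at e1
          have : p.1.castSucc = q.1.castSucc := by rw [← e1, ← e2]
          have : p.1 = q.1 := Fin.castSucc_injective _ this
          exact Subtype.ext this
        rw [← Finset.sum_image (f := fun j : Fin m' => ‖δ (y j.succ) - δ (y j.castSucc)‖) hGinj]
        rw [cvar]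
        apply Finset.sum_le_sum_of_subset_of_nonneg (Finset.subset_univ _)
        intro j _ _
        exact norm_nonneg _
      calc ∑ i ∈ Finset.univ.filter P, ENNReal.ofReal (t i)
          = ENNReal.ofReal (∑ i ∈ Finset.univ.filter P, t i) :=
            (ENNReal.ofReal_sum_of_nonneg (fun i _ => norm_nonneg _)).symm
        _ ≤ ENNReal.ofReal (cvar δ y) := ENNReal.ofReal_le_ofReal hsum
        _ ≤ twoVar δ σ₁ * (vf y : ℝ≥0∞) := cvar_le_twoVar_mul δ σ₁ m' y hymem
        _ ≤ twoVar δ σ₁ * (vf x : ℝ≥0∞) := by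
            apply mul_le_mul_right
            exact_mod_cast Nat.cast_le.mpr (vf_comp_le x ψ hψmono)
  have boundB : ∑ i ∈ Finset.univ.filter (fun i => ¬ P i), ENNReal.ofReal (t i)
      ≤ M * (vf x : ℝ≥0∞) := by
    have hside : ∀ z : ℂ, sideC 0 Complex.I z = -z.re := by
      intro z
      simp [sideC, crossC, Complex.I_re, Complex.I_im]
    set C : Finset (Fin (n+1)) := Finset.univ.filter (fun i => CrossSeg 0 Complex.I x i) with hC
    have hterm : ∀ i, ¬ P i → (ENNReal.ofReal (t i) = 0 ∨
        (i ∈ C ∧ ENNReal.ofReal (t i) ≤ M)) := by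
      intro i hPi
      have ha := hmem i.castSucc
      have hb := hmem i.succ
      simp only [hP] at hPi
      push_neg at hPi
      have hmix : ((x i.castSucc ∈ σ₁ ∧ x i.succ ∈ σ₂) ∨
          (x i.castSucc ∈ σ₂ ∧ x i.succ ∈ σ₁)) → i ∈ C := by
        intro hcase
        rw [hC, Finset.mem_filter]
        refine ⟨Finset.mem_univ _, Or.inl ?_⟩
        rw [hside, hside]
        rcases hcase with ⟨hzc, hzs⟩ | ⟨hzc, hzs⟩
        · have := hre1 _ hzc
          have := hre2 _ hzs
          nlinarith
        · have := hre2 _ hzc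
          have := hre1 _ hzs
          nlinarith
      by_cases hc1 : x i.castSucc ∈ σ₁
      · have hs2 : x i.succ ∈ σ₂ := by
          rcases hb with h | h
          · exact absurd h (hPi hc1)
          · exact h
        right
        refine ⟨hmix (Or.inl ⟨hc1, hs2⟩), ?_⟩
        have : t i = ‖δ (x i.castSucc)‖ := by
          rw [htdef]
          simp only [hδ _ hs2, zero_sub, norm_neg]
        rw [this, ofReal_norm]
        exact le_iSup₂ (f := fun z (_ : z ∈ σ₁) => (‖δ z‖₊ : ℝ≥0∞)) _ hc1
      · have hc2 : x i.castSucc ∈ σ₂ := by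
          rcases ha with h | h
          · exact absurd h hc1
          · exact h
        by_cases hs1 : x i.succ ∈ σ₁
        · right
          refine ⟨hmix (Or.inr ⟨hc2, hs1⟩), ?_⟩
          have : t i = ‖δ (x i.succ)‖ := by
            rw [htdef]
            simp only [hδ _ hc2, sub_zero]
          rw [this, ofReal_norm]
          exact le_iSup₂ (f := fun z (_ : z ∈ σ₁) => (‖δ z‖₊ : ℝ≥0∞)) _ hs1
        · left
          have hs2 : x i.succ ∈ σ₂ := by
            rcases hb with h | h
            · exact absurd h hs1
            · exact h
          rw [htdef]
          simp [hδ _ hs2, hδ _ hc2]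
    have hcardC : (C.card : ℝ≥0∞) ≤ (vf x : ℝ≥0∞) := by
      have h1 : C.card = vfLine 0 Complex.I x := by
        rw [vfLine, Nat.card_eq_fintype_card, Fintype.card_subtype]
      rw [h1]
      exact_mod_cast vfLine_le_vf 0 Complex.I Complex.I_ne_zero x
    calc ∑ i ∈ Finset.univ.filter (fun i => ¬ P i), ENNReal.ofReal (t i)
        ≤ ∑ i ∈ C, M := by
          rw [← Finset.sum_filter_add_sum_filter_not (Finset.univ.filter (fun i => ¬ P i))
            (fun i => i ∈ C)]
          have hz : ∑ i ∈ (Finset.univ.filter (fun i => ¬ P i)).filter (fun i => ¬ i ∈ C),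
              ENNReal.ofReal (t i) = 0 := by
            apply Finset.sum_eq_zero
            intro i hi
            simp only [Finset.mem_filter] at hi
            rcases hterm i hi.1.2 with h | h
            · exact h
            · exact absurd h.1 hi.2
          rw [hz, add_zero]
          calc ∑ i ∈ (Finset.univ.filter (fun i => ¬ P i)).filter (fun i => i ∈ C),
              ENNReal.ofReal (t i)
              ≤ ∑ i ∈ (Finset.univ.filter (fun i => ¬ P i)).filter (fun i => i ∈ C), M := by
                apply Finset.sum_le_sum
                intro i hi
                simp only [Finset.mem_filter] at hi
                rcases hterm i hi.1.2 with h | h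
                · rw [h]; exact bot_le
                · exact h.2
            _ ≤ ∑ i ∈ C, M := by
                apply Finset.sum_le_sum_of_subset_of_nonneg
                · intro i hi
                  simp only [Finset.mem_filter] at hi
                  exact hi.2
                · intro i _ _
                  exact bot_le
        _ = (C.card : ℝ≥0∞) * M := by rw [Finset.sum_const, nsmul_eq_mul]
        _ ≤ (vf x : ℝ≥0∞) * M := mul_le_mul_left hcardC M
        _ = M * (vf x : ℝ≥0∞) := mul_comm _ _
  calc ∑ i ∈ Finset.univ.filter P, ENNReal.ofReal (t i)
        + ∑ i ∈ Finset.univ.filter (fun i => ¬ P i), ENNReal.ofReal (t i)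
      ≤ twoVar δ σ₁ * (vf x : ℝ≥0∞) + M * (vf x : ℝ≥0∞) := add_le_add boundA boundB
    _ = (twoVar δ σ₁ + M) * (vf x : ℝ≥0∞) := (add_mul _ _ _).symm
end

section
/- Let C be a differentiable convex curve in ℝ² with endpoints x ≠ y. Then C can be split into finitely many projectable convex subcurves: there exist parameters 0 = s₀ < s₁ < ⋯ < sₘ = L of an arc-length parameterization γ of C such that each arc γ([sⱼ₋₁, sⱼ]) is a convex curve whose orthogonal projection onto the line through its own endpoints is exactly the segment joining those endpoints. -/
/-- Dot product of two planar vectors. -/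
def dotR (v w : ℝ × ℝ) : ℝ := v.1 * w.1 + v.2 * w.2

/-- Orthogonal projection of `z` onto the line through `a` and `b` (for `a ≠ b`). -/
noncomputable def projLine (a b z : ℝ × ℝ) : ℝ × ℝ :=
  a + ((dotR (z - a) (b - a)) / (dotR (b - a) (b - a))) • (b - a)


lemma dotR_sub_right (w x y : ℝ × ℝ) : dotR w (x - y) = dotR w x - dotR w y := by
  simp [dotR]; ring

lemma dotR_smul_right (w : ℝ × ℝ) (μ : ℝ) (v : ℝ × ℝ) :
    dotR w (μ • v) = μ * dotR w v := by
  simp [dotR, Prod.smul_fst, Prod.smul_snd, smul_eq_mul]; ring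

lemma dotR_neg_left (e v : ℝ × ℝ) : dotR (-e) v = -dotR e v := by
  simp [dotR]; ring

lemma dotR_pos_self (u : ℝ × ℝ) (hu : u ≠ 0) : 0 < dotR u u := by
  have h : u.1 ≠ 0 ∨ u.2 ≠ 0 := by
    by_contra h
    push_neg at h
    exact hu (Prod.ext h.1 h.2)
  have h1 := sq_nonneg u.1
  have h2 := sq_nonneg u.2
  rcases h with h | h
  · have h3 : 0 < u.1 ^ 2 := (sq_nonneg u.1).lt_of_ne (Ne.symm (pow_ne_zero 2 h))
    simp only [dotR]; nlinarith
  · have h3 : 0 < u.2 ^ 2 := (sq_nonneg u.2).lt_of_ne (Ne.symm (pow_ne_zero 2 h))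
    simp only [dotR]; nlinarith

lemma dotR_self_pos_ne (e : ℝ × ℝ) (he : e ≠ 0) : e.1 ^ 2 + e.2 ^ 2 ≠ 0 := by
  have := dotR_pos_self e he
  simp only [dotR] at this
  nlinarith

/-- If `v` is orthogonal to `e ≠ 0`, then `v` is a multiple of the rotated vector. -/
lemma perp_eq (e v : ℝ × ℝ) (he : e ≠ 0) (hv : dotR e v = 0) :
    v = ((e.1 * v.2 - e.2 * v.1) / (e.1 ^ 2 + e.2 ^ 2)) • (-e.2, e.1) := by
  have hN : e.1 ^ 2 + e.2 ^ 2 ≠ 0 := dotR_self_pos_ne e he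
  have hv' : e.1 * v.1 + e.2 * v.2 = 0 := hv
  rw [Prod.ext_iff]
  constructor
  · simp only [Prod.smul_mk, smul_eq_mul, Prod.fst]
    field_simp
    linear_combination e.1 * hv'
  · simp only [Prod.smul_mk, smul_eq_mul, Prod.snd]
    field_simp
    linear_combination e.2 * hv'

/-- If `w` is orthogonal to the rotation of `e ≠ 0`, then `w` is a multiple of `e`. -/
lemma perp_eq' (e w : ℝ × ℝ) (he : e ≠ 0) (hw : dotR w (-e.2, e.1) = 0) :
    w = ((w.1 * e.1 + w.2 * e.2) / (e.1 ^ 2 + e.2 ^ 2)) • e := by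
  have hN : e.1 ^ 2 + e.2 ^ 2 ≠ 0 := dotR_self_pos_ne e he
  have hw' : w.1 * (-e.2) + w.2 * e.1 = 0 := hw
  rw [Prod.ext_iff]
  constructor
  · simp only [Prod.smul_fst, smul_eq_mul]
    field_simp
    linear_combination (-e.2) * hw'
  · simp only [Prod.smul_snd, smul_eq_mul]
    field_simp
    linear_combination e.1 * hw'

lemma dotR_smul_left (μ : ℝ) (w v : ℝ × ℝ) : dotR (μ • w) v = μ * dotR w v := by
  simp [dotR, Prod.smul_fst, Prod.smul_snd, smul_eq_mul]; ring

/-- A convex curve never crosses a level line of a linear functional four times. -/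
lemma geomLemma (L : ℝ) (γ : ℝ → ℝ × ℝ) (hc : ContinuousOn γ (Set.Icc 0 L))
    (hinj : Set.InjOn γ (Set.Icc 0 L))
    (hsupp : ∀ t ∈ Set.Icc 0 L, ∃ w : ℝ × ℝ, w ≠ 0 ∧
      ∀ s ∈ Set.Icc 0 L, 0 ≤ dotR w (γ s - γ t))
    (e : ℝ × ℝ) (he : e ≠ 0) (c : ℝ) (t1 t2 t3 t4 : ℝ)
    (h1 : t1 ∈ Set.Icc 0 L) (h4 : t4 ∈ Set.Icc 0 L)
    (h12 : t1 < t2) (h23 : t2 < t3) (h34 : t3 < t4)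
    (f1 : dotR e (γ t1) < c) (f2 : c < dotR e (γ t2))
    (f3 : dotR e (γ t3) < c) (f4 : c < dotR e (γ t4)) : False := by
  set h : ℝ → ℝ := fun t => dotR e (γ t) with hh
  have h2m : t2 ∈ Set.Icc 0 L :=
    ⟨le_trans h1.1 (le_of_lt h12), le_trans (le_of_lt (h23.trans h34)) h4.2⟩
  have h3m : t3 ∈ Set.Icc 0 L := ⟨le_trans h2m.1 (le_of_lt h23), le_trans (le_of_lt h34) h4.2⟩
  have hcont : ContinuousOn h (Set.Icc 0 L) := by
    rw [hh]; simp only [dotR]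
    exact (continuousOn_const.mul hc.fst).add (continuousOn_const.mul hc.snd)
  have sub12 : Set.Icc t1 t2 ⊆ Set.Icc 0 L := Set.Icc_subset_Icc h1.1 h2m.2
  have sub23 : Set.Icc t2 t3 ⊆ Set.Icc 0 L := Set.Icc_subset_Icc h2m.1 h3m.2
  have sub34 : Set.Icc t3 t4 ⊆ Set.Icc 0 L := Set.Icc_subset_Icc h3m.1 h4.2
  obtain ⟨r1, hr1mem, hr1⟩ : ∃ r ∈ Set.Ioo t1 t2, h r = c :=
    (intermediate_value_Ioo (le_of_lt h12) (hcont.mono sub12)) ⟨f1, f2⟩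
  obtain ⟨r2, hr2mem, hr2⟩ : ∃ r ∈ Set.Ioo t2 t3, h r = c :=
    (intermediate_value_Ioo' (le_of_lt h23) (hcont.mono sub23)) ⟨f3, f2⟩
  obtain ⟨r3, hr3mem, hr3⟩ : ∃ r ∈ Set.Ioo t3 t4, h r = c :=
    (intermediate_value_Ioo (le_of_lt h34) (hcont.mono sub34)) ⟨f3, f4⟩
  have hr1L : r1 ∈ Set.Icc 0 L :=
    ⟨le_trans h1.1 (le_of_lt hr1mem.1), le_trans (le_of_lt hr1mem.2) h2m.2⟩
  have hr2L : r2 ∈ Set.Icc 0 L :=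
    ⟨le_trans h2m.1 (le_of_lt hr2mem.1), le_trans (le_of_lt hr2mem.2) h3m.2⟩
  have hr3L : r3 ∈ Set.Icc 0 L :=
    ⟨le_trans h3m.1 (le_of_lt hr3mem.1), le_trans (le_of_lt hr3mem.2) h4.2⟩
  have hr12 : r1 ≠ r2 := ne_of_lt (hr1mem.2.trans hr2mem.1)
  have hr23 : r2 ≠ r3 := ne_of_lt (hr2mem.2.trans hr3mem.1)
  have hr13 : r1 ≠ r3 := ne_of_lt ((hr1mem.2.trans hr2mem.1).trans (hr2mem.2.trans hr3mem.1))
  set N : ℝ := e.1 ^ 2 + e.2 ^ 2 with hN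
  set ep : ℝ × ℝ := (-e.2, e.1) with hep
  set φ : ℝ × ℝ → ℝ := fun z => (e.1 * z.2 - e.2 * z.1) / N with hφ
  -- any two crossing points differ by a multiple of `ep`
  have key : ∀ i j : ℝ, h i = c → h j = c → γ j - γ i = (φ (γ j) - φ (γ i)) • ep := by
    intro i j hhi hhj
    have hperp : dotR e (γ j - γ i) = 0 := by
      rw [dotR_sub_right]
      simp only [hh] at hhi hhj
      rw [hhi, hhj, sub_self]
    have hthis := perp_eq e (γ j - γ i) he hperp
    rw [hthis, hep]
    congr 1
    simp only [hφ, hN, Prod.fst_sub, Prod.snd_sub]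
    ring
  -- the middle-point argument
  have main : ∀ a b d : ℝ, a ∈ Set.Icc 0 L → b ∈ Set.Icc 0 L → d ∈ Set.Icc 0 L →
      h a = c → h b = c → h d = c → φ (γ a) < φ (γ b) → φ (γ b) < φ (γ d) → False := by
    intro a b d ha hb hd hha hhb hhd hab hbd
    obtain ⟨w, hw0, hwsupp⟩ := hsupp b hb
    have hva : γ a - γ b = (φ (γ a) - φ (γ b)) • ep := key b a hhb hha
    have hvd : γ d - γ b = (φ (γ d) - φ (γ b)) • ep := key b d hhb hhd
    have ha' : 0 ≤ (φ (γ a) - φ (γ b)) * dotR w ep := by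
      have hle := hwsupp a ha
      rwa [hva, dotR_smul_right] at hle
    have hd' : 0 ≤ (φ (γ d) - φ (γ b)) * dotR w ep := by
      have hle := hwsupp d hd
      rwa [hvd, dotR_smul_right] at hle
    have hx1 : 0 ≤ dotR w ep := by nlinarith
    have hx2 : dotR w ep ≤ 0 := by nlinarith
    have hwep : dotR w ep = 0 := le_antisymm hx2 hx1
    rw [hep] at hwep
    have hwl := perp_eq' e w he hwep
    set lam : ℝ := (w.1 * e.1 + w.2 * e.2) / (e.1 ^ 2 + e.2 ^ 2) with hlamdef
    have hlam : lam ≠ 0 := by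
      intro h0
      rw [h0, zero_smul] at hwl
      exact hw0 hwl
    have h2' : 0 ≤ lam * (h t2 - c) := by
      have hle := hwsupp t2 h2m
      rwa [hwl, dotR_smul_left, dotR_sub_right,
        show dotR e (γ b) = c from hhb] at hle
    have h3' : 0 ≤ lam * (h t3 - c) := by
      have hle := hwsupp t3 h3m
      rwa [hwl, dotR_smul_left, dotR_sub_right,
        show dotR e (γ b) = c from hhb] at hle
    rcases hlam.lt_or_gt with hl | hl
    · nlinarith [f2]
    · nlinarith [f3]
  have hφne : ∀ i j : ℝ, i ∈ Set.Icc 0 L → j ∈ Set.Icc 0 L → i ≠ j →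
      h i = c → h j = c → φ (γ i) ≠ φ (γ j) := by
    intro i j hi hj hij hhi hhj heq
    have hk := key i j hhi hhj
    rw [heq, sub_self, zero_smul, sub_eq_zero] at hk
    exact hij (hinj hj hi hk).symm
  have d12 := hφne r1 r2 hr1L hr2L hr12 hr1 hr2
  have d23 := hφne r2 r3 hr2L hr3L hr23 hr2 hr3
  have d13 := hφne r1 r3 hr1L hr3L hr13 hr1 hr3
  rcases lt_or_gt_of_ne d12 with a12 | a12
  · rcases lt_or_gt_of_ne d23 with a23 | a23
    · exact main r1 r2 r3 hr1L hr2L hr3L hr1 hr2 hr3 a12 a23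
    · rcases lt_or_gt_of_ne d13 with a13 | a13
      · exact main r1 r3 r2 hr1L hr3L hr2L hr1 hr3 hr2 a13 a23
      · exact main r3 r1 r2 hr3L hr1L hr2L hr3 hr1 hr2 a13 a12
  · rcases lt_or_gt_of_ne d23 with a23 | a23
    · rcases lt_or_gt_of_ne d13 with a13 | a13
      · exact main r2 r1 r3 hr2L hr1L hr3L hr2 hr1 hr3 a12 a13
      · exact main r2 r3 r1 hr2L hr3L hr1L hr2 hr3 hr1 a23 a13
    · exact main r3 r2 r1 hr3L hr2L hr1L hr3 hr2 hr1 a23 a12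

/-- A continuous-free combinatorial lemma: a function with min at `tm`, max at `tM`,
`tm ≤ tM`, and no 4-fold alternation is antitone–monotone–antitone. -/
lemma threePiece (L : ℝ) (f : ℝ → ℝ) (tm tM : ℝ)
    (hm : tm ∈ Set.Icc 0 L) (hM : tM ∈ Set.Icc 0 L)
    (hmin : ∀ x ∈ Set.Icc 0 L, f tm ≤ f x) (hmax : ∀ x ∈ Set.Icc 0 L, f x ≤ f tM)
    (hord : tm ≤ tM)
    (Halt : ∀ c t1 t2 t3 t4 : ℝ, t1 ∈ Set.Icc 0 L → t4 ∈ Set.Icc 0 L →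
      t1 < t2 → t2 < t3 → t3 < t4 →
      f t1 < c → c < f t2 → f t3 < c → c < f t4 → False) :
    AntitoneOn f (Set.Icc 0 tm) ∧ MonotoneOn f (Set.Icc tm tM) ∧
      AntitoneOn f (Set.Icc tM L) := by
  refine ⟨?_, ?_, ?_⟩
  · -- antitone on [0, tm]
    intro a ha b hb hab
    by_contra hlt
    push_neg at hlt
    obtain ⟨c, hc1, hc2⟩ := exists_between hlt
    have haL : a ∈ Set.Icc 0 L := ⟨ha.1, le_trans ha.2 (le_trans hord hM.2)⟩
    have hbL : b ∈ Set.Icc 0 L := ⟨hb.1, le_trans hb.2 (le_trans hord hM.2)⟩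
    have hab' : a < b := lt_of_le_of_ne hab (by rintro rfl; exact lt_irrefl _ hlt)
    have hbm : b < tm := lt_of_le_of_ne hb.2 (by
      rintro rfl
      exact absurd hlt (not_lt.2 (hmin a haL)))
    have hmM : tm < tM := lt_of_le_of_ne hord (by
      rintro rfl
      exact absurd hlt (not_lt.2 (le_trans (hmax b hbL) (hmin a haL))))
    exact Halt c a b tm tM haL hM hab' hbm hmM hc1 hc2
      (lt_of_le_of_lt (hmin a haL) hc1) (lt_of_lt_of_le hc2 (hmax b hbL))
  · -- monotone on [tm, tM]
    intro a ha b hb hab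
    by_contra hlt
    push_neg at hlt
    obtain ⟨c, hc1, hc2⟩ := exists_between hlt
    have haL : a ∈ Set.Icc 0 L := ⟨le_trans hm.1 ha.1, le_trans ha.2 hM.2⟩
    have hbL : b ∈ Set.Icc 0 L := ⟨le_trans hm.1 hb.1, le_trans hb.2 hM.2⟩
    have hab' : a < b := lt_of_le_of_ne hab (by rintro rfl; exact lt_irrefl _ hlt)
    have hma : tm < a := lt_of_le_of_ne ha.1 (by
      rintro rfl
      exact absurd hlt (not_lt.2 (hmin b hbL)))
    have hbM : b < tM := lt_of_le_of_ne hb.2 (by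
      rintro rfl
      exact absurd hlt (not_lt.2 (hmax a haL)))
    exact Halt c tm a b tM hm hM hma hab' hbM
      (lt_of_le_of_lt (hmin b hbL) hc1) hc2 hc1 (lt_of_lt_of_le hc2 (hmax a haL))
  · -- antitone on [tM, L]
    intro a ha b hb hab
    by_contra hlt
    push_neg at hlt
    obtain ⟨c, hc1, hc2⟩ := exists_between hlt
    have haL : a ∈ Set.Icc 0 L := ⟨le_trans hM.1 ha.1, ha.2⟩
    have hbL : b ∈ Set.Icc 0 L := ⟨le_trans hM.1 hb.1, hb.2⟩
    have hab' : a < b := lt_of_le_of_ne hab (by rintro rfl; exact lt_irrefl _ hlt)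
    have hMa : tM < a := lt_of_le_of_ne ha.1 (by
      rintro rfl
      exact absurd hlt (not_lt.2 (hmax b hbL)))
    have hmM : tm < tM := by
      rcases lt_or_eq_of_le hord with h | h
      · exact h
      · exfalso
        exact absurd hlt (not_lt.2 (le_trans (hmax b hbL) (by rw [← h]; exact hmin a haL)))
    exact Halt c tm tM a b hm hbL hmM hMa hab'
      (lt_of_le_of_lt (hmin a haL) hc1) (lt_of_lt_of_le hc2 (hmax b hbL))
      hc1 hc2

/-- Mono-or-anti on an interval. -/
def MorA (f : ℝ → ℝ) (s : Set ℝ) : Prop := MonotoneOn f s ∨ AntitoneOn f s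

lemma piecewise_lemma (L : ℝ) (hL : 0 ≤ L) (f : ℝ → ℝ)
    (hcont : ContinuousOn f (Set.Icc 0 L))
    (Halt : ∀ c t1 t2 t3 t4 : ℝ, t1 ∈ Set.Icc 0 L → t4 ∈ Set.Icc 0 L →
      t1 < t2 → t2 < t3 → t3 < t4 →
      f t1 < c → c < f t2 → f t3 < c → c < f t4 → False)
    (Halt' : ∀ c t1 t2 t3 t4 : ℝ, t1 ∈ Set.Icc 0 L → t4 ∈ Set.Icc 0 L →
      t1 < t2 → t2 < t3 → t3 < t4 →
      c < f t1 → f t2 < c → c < f t3 → f t4 < c → False) :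
    ∃ p q : ℝ, p ∈ Set.Icc 0 L ∧ q ∈ Set.Icc 0 L ∧ p ≤ q ∧
      MorA f (Set.Icc 0 p) ∧ MorA f (Set.Icc p q) ∧ MorA f (Set.Icc q L) := by
  have hne : (Set.Icc (0:ℝ) L).Nonempty := ⟨0, le_refl 0, hL⟩
  obtain ⟨tm, hmmem, hmin'⟩ := isCompact_Icc.exists_isMinOn hne hcont
  obtain ⟨tM, hMmem, hmax'⟩ := isCompact_Icc.exists_isMaxOn hne hcont
  have hmin : ∀ x ∈ Set.Icc 0 L, f tm ≤ f x := fun x hx => hmin' hx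
  have hmax : ∀ x ∈ Set.Icc 0 L, f x ≤ f tM := fun x hx => hmax' hx
  rcases le_total tm tM with hord | hord
  · obtain ⟨ha1, ha2, ha3⟩ := threePiece L f tm tM hmmem hMmem hmin hmax hord Halt
    exact ⟨tm, tM, hmmem, hMmem, hord, Or.inr ha1, Or.inl ha2, Or.inr ha3⟩
  · -- apply to -f : min of -f at tM, max at tm
    have hmin2 : ∀ x ∈ Set.Icc 0 L, (fun t => -(f t)) tM ≤ (fun t => -(f t)) x := by
      intro x hx; simpa using hmax x hx
    have hmax2 : ∀ x ∈ Set.Icc 0 L, (fun t => -(f t)) x ≤ (fun t => -(f t)) tm := by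
      intro x hx; simpa using hmin x hx
    have Halt2 : ∀ c t1 t2 t3 t4 : ℝ, t1 ∈ Set.Icc 0 L → t4 ∈ Set.Icc 0 L →
        t1 < t2 → t2 < t3 → t3 < t4 →
        (fun t => -(f t)) t1 < c → c < (fun t => -(f t)) t2 →
        (fun t => -(f t)) t3 < c → c < (fun t => -(f t)) t4 → False := by
      intro c t1 t2 t3 t4 m1 m4 o12 o23 o34 g1 g2 g3 g4
      simp only at g1 g2 g3 g4
      exact Halt' (-c) t1 t2 t3 t4 m1 m4 o12 o23 o34
        (by linarith) (by linarith) (by linarith) (by linarith)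
    obtain ⟨ha1, ha2, ha3⟩ :=
      threePiece L (fun t => -(f t)) tM tm hMmem hmmem hmin2 hmax2 hord Halt2
    refine ⟨tM, tm, hMmem, hmmem, hord, ?_, ?_, ?_⟩
    · left
      intro x hx y hy hxy
      have := ha1 hx hy hxy
      simp only at this
      linarith
    · right
      intro x hx y hy hxy
      have := ha2 hx hy hxy
      simp only at this
      linarith
    · left
      intro x hx y hy hxy
      have := ha3 hx hy hxy
      simp only at this
      linarith

/-- helper: monotone product. -/
lemma mora_term (g : ℝ → ℝ) (a b : ℝ) (hab : a ≤ b)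
    (hg : MonotoneOn g (Set.Icc a b) ∨ AntitoneOn g (Set.Icc a b)) :
    MonotoneOn (fun t => (g t - g a) * (g b - g a)) (Set.Icc a b) := by
  have ha : a ∈ Set.Icc a b := ⟨le_refl a, hab⟩
  have hb : b ∈ Set.Icc a b := ⟨hab, le_refl b⟩
  rcases hg with hg | hg
  · intro s hs t ht hst
    have hd : 0 ≤ g b - g a := sub_nonneg.2 (hg ha hb hab)
    have := hg hs ht hst
    show (g s - g a) * (g b - g a) ≤ (g t - g a) * (g b - g a)
    nlinarith
  · intro s hs t ht hst
    have hd : g b - g a ≤ 0 := sub_nonpos.2 (hg ha hb hab)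
    have := hg hs ht hst
    show (g s - g a) * (g b - g a) ≤ (g t - g a) * (g b - g a)
    nlinarith

/-- On a piece where both coordinates are monotone, the curve is projectable onto its chord. -/
lemma pieceLemma (γ : ℝ → ℝ × ℝ) (a b : ℝ) (hab : a < b)
    (hc : ContinuousOn γ (Set.Icc a b)) (hinj : Set.InjOn γ (Set.Icc a b))
    (hx : MonotoneOn (fun t => (γ t).1) (Set.Icc a b) ∨
      AntitoneOn (fun t => (γ t).1) (Set.Icc a b))
    (hy : MonotoneOn (fun t => (γ t).2) (Set.Icc a b) ∨
      AntitoneOn (fun t => (γ t).2) (Set.Icc a b)) :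
    γ a ≠ γ b ∧
      projLine (γ a) (γ b) '' (γ '' Set.Icc a b) = segment ℝ (γ a) (γ b) := by
  have hamem : a ∈ Set.Icc a b := ⟨le_refl a, hab.le⟩
  have hbmem : b ∈ Set.Icc a b := ⟨hab.le, le_refl b⟩
  have hne : γ a ≠ γ b := fun h => hab.ne (hinj hamem hbmem h)
  refine ⟨hne, ?_⟩
  set u : ℝ × ℝ := γ b - γ a with hu
  have hu0 : u ≠ 0 := sub_ne_zero.2 (Ne.symm hne)
  set D : ℝ := dotR u u with hD
  have hDpos : 0 < D := dotR_pos_self u hu0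
  set h : ℝ → ℝ := fun t =>
    ((γ t).1 - (γ a).1) * ((γ b).1 - (γ a).1) +
      ((γ t).2 - (γ a).2) * ((γ b).2 - (γ a).2) with hh
  have hdot : ∀ t, dotR (γ t - γ a) u = h t := by
    intro t
    simp only [hh, hu, dotR, Prod.fst_sub, Prod.snd_sub]
  have hmono : MonotoneOn h (Set.Icc a b) := by
    rw [hh]
    exact (mora_term (fun t => (γ t).1) a b hab.le hx).add
      (mora_term (fun t => (γ t).2) a b hab.le hy)
  have hcont : ContinuousOn h (Set.Icc a b) := by
    rw [hh]
    exact (((hc.fst.sub continuousOn_const).mul continuousOn_const).add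
      ((hc.snd.sub continuousOn_const).mul continuousOn_const))
  have hha : h a = 0 := by simp only [hh]; ring
  have hhb : h b = D := by
    simp only [hh, hD, hu, dotR, Prod.fst_sub, Prod.snd_sub]
  have hbound : ∀ t ∈ Set.Icc a b, 0 ≤ h t ∧ h t ≤ D := by
    intro t ht
    constructor
    · rw [← hha]; exact hmono hamem ht ht.1
    · rw [← hhb]; exact hmono ht hbmem ht.2
  have hproj : ∀ t, projLine (γ a) (γ b) (γ t) = γ a + (h t / D) • u := by
    intro t
    simp only [projLine, hu, hD]
    rw [hdot t]
  rw [segment_eq_image']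
  ext z
  constructor
  · rintro ⟨-, ⟨t, ht, rfl⟩, rfl⟩
    refine ⟨h t / D, ⟨?_, ?_⟩, ?_⟩
    · exact div_nonneg (hbound t ht).1 hDpos.le
    · exact (div_le_one hDpos).2 (hbound t ht).2
    · rw [hproj t]
  · rintro ⟨θ, ⟨hθ0, hθ1⟩, rfl⟩
    have hmem : θ * D ∈ Set.Icc (h a) (h b) := by
      rw [hha, hhb]
      constructor
      · exact mul_nonneg hθ0 hDpos.le
      · nlinarith
    obtain ⟨t, ht, hht⟩ := intermediate_value_Icc hab.le hcont hmem
    refine ⟨γ t, ⟨t, ht, rfl⟩, ?_⟩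
    rw [hproj t, hht, mul_div_assoc, div_self hDpos.ne', mul_one]

theorem stmt16 (L : ℝ) (hL : 0 < L) (γ γ' : ℝ → ℝ × ℝ)
    (hc : ContinuousOn γ (Set.Icc 0 L)) (hinj : Set.InjOn γ (Set.Icc 0 L))
    (hend : γ 0 ≠ γ L)
    (hderiv : ∀ t ∈ Set.Ioo 0 L, HasDerivAt γ (γ' t) t)
    (harc : ∀ t ∈ Set.Ioo 0 L, ‖γ' t‖ = 1)
    (hsupp : ∀ t ∈ Set.Icc 0 L, ∃ w : ℝ × ℝ, w ≠ 0 ∧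
      ∀ s ∈ Set.Icc 0 L, 0 ≤ dotR w (γ s - γ t)) :
    ∃ (m : ℕ) (s : Fin (m+1) → ℝ), StrictMono s ∧ s 0 = 0 ∧ s (Fin.last m) = L ∧
      ∀ j : Fin m,
        γ (s j.castSucc) ≠ γ (s j.succ) ∧
        projLine (γ (s j.castSucc)) (γ (s j.succ)) ''
            (γ '' Set.Icc (s j.castSucc) (s j.succ))
          = segment ℝ (γ (s j.castSucc)) (γ (s j.succ)) := by
  -- alternation bans for the two coordinate functions
  have Halt1 : ∀ c t1 t2 t3 t4 : ℝ, t1 ∈ Set.Icc 0 L → t4 ∈ Set.Icc 0 L →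
      t1 < t2 → t2 < t3 → t3 < t4 →
      (γ t1).1 < c → c < (γ t2).1 → (γ t3).1 < c → c < (γ t4).1 → False := by
    intro c t1 t2 t3 t4 m1 m4 o1 o2 o3 g1 g2 g3 g4
    exact geomLemma L γ hc hinj hsupp (1, 0) (by norm_num [Prod.ext_iff]) c t1 t2 t3 t4
      m1 m4 o1 o2 o3 (by simpa [dotR] using g1) (by simpa [dotR] using g2)
      (by simpa [dotR] using g3) (by simpa [dotR] using g4)
  have Halt1' : ∀ c t1 t2 t3 t4 : ℝ, t1 ∈ Set.Icc 0 L → t4 ∈ Set.Icc 0 L →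
      t1 < t2 → t2 < t3 → t3 < t4 →
      c < (γ t1).1 → (γ t2).1 < c → c < (γ t3).1 → (γ t4).1 < c → False := by
    intro c t1 t2 t3 t4 m1 m4 o1 o2 o3 g1 g2 g3 g4
    exact geomLemma L γ hc hinj hsupp (-1, 0) (by norm_num [Prod.ext_iff]) (-c) t1 t2 t3 t4
      m1 m4 o1 o2 o3 (by simp [dotR]; linarith) (by simp [dotR]; linarith)
      (by simp [dotR]; linarith) (by simp [dotR]; linarith)
  have Halt2 : ∀ c t1 t2 t3 t4 : ℝ, t1 ∈ Set.Icc 0 L → t4 ∈ Set.Icc 0 L →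
      t1 < t2 → t2 < t3 → t3 < t4 →
      (γ t1).2 < c → c < (γ t2).2 → (γ t3).2 < c → c < (γ t4).2 → False := by
    intro c t1 t2 t3 t4 m1 m4 o1 o2 o3 g1 g2 g3 g4
    exact geomLemma L γ hc hinj hsupp (0, 1) (by norm_num [Prod.ext_iff]) c t1 t2 t3 t4
      m1 m4 o1 o2 o3 (by simpa [dotR] using g1) (by simpa [dotR] using g2)
      (by simpa [dotR] using g3) (by simpa [dotR] using g4)
  have Halt2' : ∀ c t1 t2 t3 t4 : ℝ, t1 ∈ Set.Icc 0 L → t4 ∈ Set.Icc 0 L →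
      t1 < t2 → t2 < t3 → t3 < t4 →
      c < (γ t1).2 → (γ t2).2 < c → c < (γ t3).2 → (γ t4).2 < c → False := by
    intro c t1 t2 t3 t4 m1 m4 o1 o2 o3 g1 g2 g3 g4
    exact geomLemma L γ hc hinj hsupp (0, -1) (by norm_num [Prod.ext_iff]) (-c) t1 t2 t3 t4
      m1 m4 o1 o2 o3 (by simp [dotR]; linarith) (by simp [dotR]; linarith)
      (by simp [dotR]; linarith) (by simp [dotR]; linarith)
  obtain ⟨p1, q1, hp1, hq1, hpq1, A1, A2, A3⟩ :=
    piecewise_lemma L hL.le (fun t => (γ t).1) hc.fst Halt1 Halt1'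
  obtain ⟨p2, q2, hp2, hq2, hpq2, B1, B2, B3⟩ :=
    piecewise_lemma L hL.le (fun t => (γ t).2) hc.snd Halt2 Halt2'
  -- the finite set of cut points
  set F : Finset ℝ := {0, L, p1, q1, p2, q2} with hF
  have hFsub : ∀ x ∈ F, x ∈ Set.Icc 0 L := by
    intro x hx
    simp only [hF, Finset.mem_insert, Finset.mem_singleton] at hx
    rcases hx with h | h | h | h | h | h <;> rw [h]
    · exact ⟨le_refl 0, hL.le⟩
    · exact ⟨hL.le, le_refl L⟩
    · exact hp1
    · exact hq1
    · exact hp2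
    · exact hq2
  have h0F : (0:ℝ) ∈ F := by simp [hF]
  have hLF : L ∈ F := by simp [hF]
  set l : List ℝ := F.sort (· ≤ ·) with hl
  have hlen : l.length = F.card := Finset.length_sort _
  have hpos : 0 < l.length := by
    rw [hlen]
    exact Finset.card_pos.2 ⟨0, h0F⟩
  have hml : l.length - 1 + 1 = l.length := Nat.succ_pred_eq_of_pos hpos
  have hgetmono : StrictMono l.get := (Finset.sortedLT_sort F).strictMono_get
  have hmemF : ∀ k : Fin l.length, l.get k ∈ F := by
    intro k
    exact (Finset.mem_sort (α := ℝ) (· ≤ ·)).1 (l.get_mem _)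
  refine ⟨l.length - 1, fun j => l.get (Fin.cast hml j), ?_, ?_, ?_, ?_⟩
  · intro i j hij
    refine hgetmono ?_
    rw [Fin.lt_def]
    simp only [Fin.coe_cast]
    exact Fin.lt_def.1 hij
  · -- first value is 0
    have h0l : (0:ℝ) ∈ l := by rw [hl]; exact (Finset.mem_sort (α := ℝ) (· ≤ ·)).2 h0F
    obtain ⟨k, hk⟩ := List.mem_iff_get.1 h0l
    refine le_antisymm ?_ (hFsub _ (hmemF _)).1
    rw [← hk]
    apply hgetmono.monotone
    simp only [Fin.le_def, Fin.coe_cast, Fin.val_zero]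
    exact Nat.zero_le _
  · -- last value is L
    have hLl : L ∈ l := by rw [hl]; exact (Finset.mem_sort (α := ℝ) (· ≤ ·)).2 hLF
    obtain ⟨k, hk⟩ := List.mem_iff_get.1 hLl
    refine le_antisymm (hFsub _ (hmemF _)).2 ?_
    rw [← hk]
    apply hgetmono.monotone
    have hkl : (k : ℕ) < l.length := k.isLt
    simp only [Fin.le_def, Fin.coe_cast, Fin.val_last]
    omega
  · intro j
    set s : Fin (l.length - 1 + 1) → ℝ := fun j => l.get (Fin.cast hml j) with hs
    have hgap : ∀ x ∈ F, x ≤ s j.castSucc ∨ s j.succ ≤ x := by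
      intro x hxF
      by_contra hcon
      push_neg at hcon
      obtain ⟨h1x, h2x⟩ := hcon
      have hxl : x ∈ l := by rw [hl]; exact (Finset.mem_sort (α := ℝ) (· ≤ ·)).2 hxF
      obtain ⟨k, hk⟩ := List.mem_iff_get.1 hxl
      rw [← hk] at h1x h2x
      have hk1 := hgetmono.lt_iff_lt.1 h1x
      have hk2 := hgetmono.lt_iff_lt.1 h2x
      simp only [Fin.lt_def, Fin.coe_cast, Fin.coe_castSucc, Fin.val_succ] at hk1 hk2
      omega
    have hab : s j.castSucc < s j.succ := by
      apply hgetmono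
      rw [Fin.lt_def]
      simp only [Fin.coe_cast, Fin.coe_castSucc, Fin.val_succ]
      omega
    have haI : s j.castSucc ∈ Set.Icc 0 L := hFsub _ (hmemF _)
    have hbI : s j.succ ∈ Set.Icc 0 L := hFsub _ (hmemF _)
    have hsub : Set.Icc (s j.castSucc) (s j.succ) ⊆ Set.Icc 0 L :=
      Set.Icc_subset_Icc haI.1 hbI.2
    have hcontain : ∀ p q : ℝ, p ≤ q → (p ≤ s j.castSucc ∨ s j.succ ≤ p) →
        (q ≤ s j.castSucc ∨ s j.succ ≤ q) →
        Set.Icc (s j.castSucc) (s j.succ) ⊆ Set.Icc 0 p ∨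
        Set.Icc (s j.castSucc) (s j.succ) ⊆ Set.Icc p q ∨
        Set.Icc (s j.castSucc) (s j.succ) ⊆ Set.Icc q L := by
      intro p q hpq hp hq
      rcases hp with hp | hp
      · rcases hq with hq | hq
        · exact Or.inr (Or.inr (Set.Icc_subset_Icc hq hbI.2))
        · exact Or.inr (Or.inl (Set.Icc_subset_Icc hp hq))
      · rcases hq with hq | hq
        · exact Or.inr (Or.inl (Set.Icc_subset_Icc (le_trans hpq hq) (le_trans hp hpq)))
        · exact Or.inl (Set.Icc_subset_Icc haI.1 hp)
    have morA_mono : ∀ (f : ℝ → ℝ) (u v : Set ℝ), v ⊆ u → MorA f u → MorA f v := by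
      intro f u v hvu hm
      rcases hm with hm | hm
      · exact Or.inl (hm.mono hvu)
      · exact Or.inr (hm.mono hvu)
    have hx' : MorA (fun t => (γ t).1) (Set.Icc (s j.castSucc) (s j.succ)) := by
      rcases hcontain p1 q1 hpq1 (hgap p1 (by simp [hF])) (hgap q1 (by simp [hF]))
        with h | h | h
      · exact morA_mono _ _ _ h A1
      · exact morA_mono _ _ _ h A2
      · exact morA_mono _ _ _ h A3
    have hy' : MorA (fun t => (γ t).2) (Set.Icc (s j.castSucc) (s j.succ)) := by
      rcases hcontain p2 q2 hpq2 (hgap p2 (by simp [hF])) (hgap q2 (by simp [hF]))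
        with h | h | h
      · exact morA_mono _ _ _ h B1
      · exact morA_mono _ _ _ h B2
      · exact morA_mono _ _ _ h B3
    exact pieceLemma γ (s j.castSucc) (s j.succ) hab (hc.mono hsub) (hinj.mono hsub) hx' hy'
end
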